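/- For even d ≥ 2, e_d(d+3) = binomial(d+2, 3); that is, the minimum number of ordinary hyperplanes spanned by a set of d+3 points in PG(d,ℝ), every d of which span a hyperplane and spanning the whole space, equals binomial(d+2,3). -/

import Mathlib

open Module

/-- The number of ordinary hyperplanes (hyperplanes containing exactly `d` points) of a
finite set of points of `PG(d,ℝ)`. -/
noncomputable def ordinaryCount (d : ℕ) (S : Finset (Projectivization ℝ (Fin (d+1) → ℝ))) : ℕ :=
  {H : Submodule ℝ (Fin (d+1) → ℝ) | finrank ℝ ↥H = d ∧
    {p ∈ (S : Set (Projectivization ℝ (Fin (d+1) → ℝ))) | p.submodule ≤ H}.ncard = d}.ncard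

/-- `e d n` : the minimum number of ordinary hyperplanes over all sets of `n` points of
`PG(d,ℝ)` such that every `d` points span a hyperplane and the points span the whole space. -/
noncomputable def e (d n : ℕ) : ℕ :=
  sInf { N | ∃ S : Finset (Projectivization ℝ (Fin (d+1) → ℝ)), S.card = n ∧
    (∀ T ⊆ S, T.card = d →
      finrank ℝ ↥(⨆ p ∈ T, Projectivization.submodule p) = d) ∧
    (⨆ p ∈ S, Projectivization.submodule p) = ⊤ ∧ N = ordinaryCount d S }

open Finset

namespace Stmt7

open scoped Classical

variable {d : ℕ}

noncomputable def spanF (T : Finset (Projectivization ℝ (Fin (d+1) → ℝ))) :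
    Submodule ℝ (Fin (d+1) → ℝ) := ⨆ p ∈ T, p.submodule

lemma spanF_le_iff {T : Finset (Projectivization ℝ (Fin (d+1) → ℝ))}
    {H : Submodule ℝ (Fin (d+1) → ℝ)} :
    spanF T ≤ H ↔ ∀ p ∈ T, p.submodule ≤ H := by
  simp [spanF, iSup₂_le_iff]

lemma spanF_mono {T T' : Finset (Projectivization ℝ (Fin (d+1) → ℝ))} (h : T ⊆ T') :
    spanF T ≤ spanF T' := by
  rw [spanF_le_iff]
  intro p hp
  exact le_iSup₂_of_le p (h hp) le_rfl

noncomputable def pts (S : Finset (Projectivization ℝ (Fin (d+1) → ℝ)))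
    (H : Submodule ℝ (Fin (d+1) → ℝ)) : Finset (Projectivization ℝ (Fin (d+1) → ℝ)) :=
  S.filter (fun p => p.submodule ≤ H)

lemma pts_subset {S : Finset (Projectivization ℝ (Fin (d+1) → ℝ))} {H} : pts S H ⊆ S :=
  filter_subset _ _

lemma spanF_pts_le {S : Finset (Projectivization ℝ (Fin (d+1) → ℝ))} {H} :
    spanF (pts S H) ≤ H := by
  rw [spanF_le_iff]
  intro p hp
  exact (mem_filter.mp hp).2

noncomputable def Hset (d : ℕ) (S : Finset (Projectivization ℝ (Fin (d+1) → ℝ))) :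
    Finset (Submodule ℝ (Fin (d+1) → ℝ)) := (S.powersetCard d).image spanF

section counting

variable {S : Finset (Projectivization ℝ (Fin (d+1) → ℝ))}
  (hS : S.card = d + 3)
  (hgen : ∀ T ⊆ S, T.card = d → finrank ℝ (spanF T) = d)

include hS hgen

omit hS in
lemma finrank_of_mem_Hset {H} (hH : H ∈ Hset d S) : finrank ℝ H = d := by
  obtain ⟨T, hT, rfl⟩ := mem_image.mp hH
  obtain ⟨hTS, hTc⟩ := mem_powersetCard.mp hT
  exact hgen T hTS hTc

omit hS in
/-- rigidity: a hyperplane containing a spanning d-subset equals its span -/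
lemma rigid {T H} (hT : T ∈ S.powersetCard d) (hle : spanF T ≤ H)
    (hHr : finrank ℝ H = d) : H = spanF T := by
  obtain ⟨hTS, hTc⟩ := mem_powersetCard.mp hT
  exact (Submodule.eq_of_le_of_finrank_le hle (by rw [hHr, hgen T hTS hTc])).symm

omit hS in
lemma subset_pts_iff {T H} (hT : T ∈ S.powersetCard d) (hH : H ∈ Hset d S) :
    T ⊆ pts S H ↔ spanF T = H := by
  constructor
  · intro h
    have hle : spanF T ≤ H := le_trans (spanF_mono h) spanF_pts_le
    exact (rigid hgen hT hle (finrank_of_mem_Hset hgen hH)).symm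
  · intro h
    intro p hp
    refine mem_filter.mpr ⟨(mem_powersetCard.mp hT).1 hp, ?_⟩
    rw [← h]
    exact le_iSup₂_of_le p hp le_rfl

omit hS hgen in
lemma spanF_mem_Hset {T} (hT : T ∈ S.powersetCard d) : spanF T ∈ Hset d S :=
  mem_image_of_mem _ hT

omit hS in
lemma d_le_card_pts {H} (hH : H ∈ Hset d S) : d ≤ (pts S H).card := by
  obtain ⟨T, hT, rfl⟩ := mem_image.mp hH
  have := (subset_pts_iff hgen hT (spanF_mem_Hset hT)).mpr rfl
  calc d = T.card := (mem_powersetCard.mp hT).2.symm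
    _ ≤ _ := card_le_card this

lemma card_pts_le (hspan : spanF S = (⊤ : Submodule ℝ (Fin (d+1) → ℝ)))
    {H} (hH : H ∈ Hset d S) : (pts S H).card ≤ d + 2 := by
  by_contra h
  push_neg at h
  have hpts : pts S H = S := eq_of_subset_of_card_le pts_subset (by rw [hS]; omega)
  have : (⊤ : Submodule ℝ (Fin (d+1) → ℝ)) ≤ H := by
    rw [← hspan, ← hpts]; exact spanF_pts_le
  have hHtop : H = ⊤ := top_le_iff.mp this
  have := finrank_of_mem_Hset hgen hH
  rw [hHtop, finrank_top, Module.finrank_fin_fun] at this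
  omega

omit hS in
/-- two members of Hset sharing at least d points are equal -/
lemma eq_of_common_pts {H H'} (hH : H ∈ Hset d S) (hH' : H' ∈ Hset d S)
    (h : d ≤ (pts S H ∩ pts S H').card) : H = H' := by
  obtain ⟨T, hTsub, hTc⟩ := Finset.exists_subset_card_eq h
  have hTS : T ∈ S.powersetCard d :=
    mem_powersetCard.mpr ⟨(hTsub.trans (inter_subset_left)).trans pts_subset, hTc⟩
  have h1 := (subset_pts_iff hgen hTS hH).mp (hTsub.trans inter_subset_left)
  have h2 := (subset_pts_iff hgen hTS hH').mp (hTsub.trans inter_subset_right)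
  rw [← h1, ← h2]

lemma main_sum : ∑ H ∈ Hset d S, ((pts S H).card).choose d = (d+3).choose 3 := by
  have key : (S.powersetCard d).card = ∑ H ∈ Hset d S,
      ((S.powersetCard d).filter (fun T => spanF T = H)).card :=
    Finset.card_eq_sum_card_fiberwise (fun T hT => spanF_mem_Hset hT)
  rw [card_powersetCard, hS] at key
  have h3 : (d+3).choose d = (d+3).choose 3 := by
    have := Nat.choose_symm (n := d+3) (k := 3) (by omega)
    simpa using this
  rw [h3] at key
  rw [key]
  refine Finset.sum_congr rfl fun H hH => ?_
  have hfib : (S.powersetCard d).filter (fun T => spanF T = H) = (pts S H).powersetCard d := by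
    ext T
    simp only [mem_filter, mem_powersetCard]
    constructor
    · rintro ⟨hT, hsp⟩
      exact ⟨(subset_pts_iff hgen (mem_powersetCard.mpr hT) hH).mpr hsp, hT.2⟩
    · rintro ⟨hsub, hc⟩
      have hT : T ∈ S.powersetCard d := mem_powersetCard.mpr ⟨hsub.trans pts_subset, hc⟩
      exact ⟨mem_powersetCard.mp hT, (subset_pts_iff hgen hT hH).mp hsub⟩
  rw [hfib, card_powersetCard]

omit hS hgen in
lemma card_coe_pts {H} : {p ∈ (S : Set (Projectivization ℝ (Fin (d+1) → ℝ))) | p.submodule ≤ H}.ncard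
    = (pts S H).card := by
  rw [show {p ∈ (S : Set (Projectivization ℝ (Fin (d+1) → ℝ))) | p.submodule ≤ H}
      = ↑(pts S H) from (Finset.coe_filter _ _).symm]
  exact Set.ncard_coe_finset _

omit hS in
lemma ordinaryCount_eq :
    ordinaryCount d S = ((Hset d S).filter (fun H => (pts S H).card = d)).card := by
  have hset : {H : Submodule ℝ (Fin (d+1) → ℝ) | finrank ℝ ↥H = d ∧
      {p ∈ (S : Set (Projectivization ℝ (Fin (d+1) → ℝ))) | p.submodule ≤ H}.ncard = d}
      = ↑((Hset d S).filter (fun H => (pts S H).card = d)) := by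
    ext H
    simp only [Set.mem_setOf_eq, Finset.coe_filter, card_coe_pts]
    constructor
    · rintro ⟨hr, hc⟩
      have hT : pts S H ∈ S.powersetCard d := mem_powersetCard.mpr ⟨pts_subset, hc⟩
      have hHe : H = spanF (pts S H) := rigid hgen hT spanF_pts_le hr
      exact ⟨hHe ▸ spanF_mem_Hset hT, hc⟩
    · rintro ⟨hH, hc⟩
      exact ⟨finrank_of_mem_Hset hgen hH, hc⟩
  rw [ordinaryCount, hset, Set.ncard_coe_finset]

lemma pts_card_mem (hspan : spanF S = (⊤ : Submodule ℝ (Fin (d+1) → ℝ))) {H} (hH : H ∈ Hset d S) :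
    (pts S H).card = d ∨ (pts S H).card = d + 1 ∨ (pts S H).card = d + 2 := by
  have h1 := d_le_card_pts hgen hH
  have h2 := card_pts_le hS hgen hspan hH
  omega

lemma tau_identity (hspan : spanF S = (⊤ : Submodule ℝ (Fin (d+1) → ℝ))) :
    ((Hset d S).filter (fun H => (pts S H).card = d)).card
    + (d+1) * ((Hset d S).filter (fun H => (pts S H).card = d+1)).card
    + (d+2).choose 2 * ((Hset d S).filter (fun H => (pts S H).card = d+2)).card
    = (d+3).choose 3 := by
  rw [← main_sum hS hgen]
  have hsplit : Hset d S = ((Hset d S).filter (fun H => (pts S H).card = d))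
      ∪ (((Hset d S).filter (fun H => (pts S H).card = d+1))
      ∪ ((Hset d S).filter (fun H => (pts S H).card = d+2))) := by
    ext H
    simp only [mem_union, mem_filter]
    constructor
    · intro hH
      rcases pts_card_mem hS hgen hspan hH with h | h | h
      · exact Or.inl ⟨hH, h⟩
      · exact Or.inr (Or.inl ⟨hH, h⟩)
      · exact Or.inr (Or.inr ⟨hH, h⟩)
    · rintro (⟨h, _⟩ | ⟨h, _⟩ | ⟨h, _⟩) <;> exact h
  have hd12 : Disjoint ((Hset d S).filter (fun H => (pts S H).card = d+1))
      ((Hset d S).filter (fun H => (pts S H).card = d+2)) := by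
    simp only [Finset.disjoint_left, mem_filter]
    rintro H ⟨_, h1⟩ ⟨_, h2⟩
    omega
  have hd0 : Disjoint ((Hset d S).filter (fun H => (pts S H).card = d))
      (((Hset d S).filter (fun H => (pts S H).card = d+1))
      ∪ ((Hset d S).filter (fun H => (pts S H).card = d+2))) := by
    simp only [Finset.disjoint_left, mem_filter, mem_union]
    rintro H ⟨_, h0⟩ (⟨_, h1⟩ | ⟨_, h2⟩) <;> omega
  conv_rhs => rw [hsplit]
  rw [Finset.sum_union hd0, Finset.sum_union hd12]
  have e0 : ∑ H ∈ (Hset d S).filter (fun H => (pts S H).card = d), ((pts S H).card).choose d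
      = ((Hset d S).filter (fun H => (pts S H).card = d)).card * 1 :=
    Finset.sum_const_nat fun H hH => by rw [(mem_filter.mp hH).2, Nat.choose_self]
  have e1 : ∑ H ∈ (Hset d S).filter (fun H => (pts S H).card = d+1), ((pts S H).card).choose d
      = ((Hset d S).filter (fun H => (pts S H).card = d+1)).card * (d+1) :=
    Finset.sum_const_nat fun H hH => by
      rw [(mem_filter.mp hH).2]
      have h : d + 1 - d = 1 := by omega
      rw [← Nat.choose_symm (by omega : d ≤ d + 1), h, Nat.choose_one_right]
  have e2 : ∑ H ∈ (Hset d S).filter (fun H => (pts S H).card = d+2), ((pts S H).card).choose d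
      = ((Hset d S).filter (fun H => (pts S H).card = d+2)).card * ((d+2).choose 2) :=
    Finset.sum_const_nat fun H hH => by
      rw [(mem_filter.mp hH).2]
      have h : d + 2 - d = 2 := by omega
      rw [← Nat.choose_symm (by omega : d ≤ d + 2), h]
  rw [e0, e1, e2]
  ring

lemma tau2_le_one : ((Hset d S).filter (fun H => (pts S H).card = d+2)).card ≤ 1 := by
  refine Finset.card_le_one.mpr fun H hH H' hH' => ?_
  obtain ⟨hHm, hHc⟩ := mem_filter.mp hH
  obtain ⟨hHm', hHc'⟩ := mem_filter.mp hH'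
  refine eq_of_common_pts hgen hHm hHm' ?_
  have h1 := Finset.card_inter_add_card_union (pts S H) (pts S H')
  have h2 : (pts S H ∪ pts S H').card ≤ d + 3 := by
    rw [← hS]
    exact card_le_card (union_subset pts_subset pts_subset)
  omega

lemma no_mix (h2 : ((Hset d S).filter (fun H => (pts S H).card = d+2)).Nonempty) :
    (Hset d S).filter (fun H => (pts S H).card = d+1) = ∅ := by
  obtain ⟨H2, hH2⟩ := h2
  obtain ⟨hH2m, hH2c⟩ := mem_filter.mp hH2
  rw [Finset.eq_empty_iff_forall_notMem]
  intro H1 hH1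
  obtain ⟨hH1m, hH1c⟩ := mem_filter.mp hH1
  have heq : H1 = H2 := by
    refine eq_of_common_pts hgen hH1m hH2m ?_
    have h1 := Finset.card_inter_add_card_union (pts S H1) (pts S H2)
    have h2 : (pts S H1 ∪ pts S H2).card ≤ d + 3 := by
      rw [← hS]
      exact card_le_card (union_subset pts_subset pts_subset)
    omega
  rw [heq, hH2c] at hH1c
  omega

lemma two_tau1 : 2 * ((Hset d S).filter (fun H => (pts S H).card = d+1)).card ≤ d + 3 := by
  set F := (Hset d S).filter (fun H => (pts S H).card = d+1) with hF
  have hdisj : ∀ H ∈ F, ∀ H' ∈ F, H ≠ H' → Disjoint (S \ pts S H) (S \ pts S H') := by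
    intro H hH H' hH' hne
    obtain ⟨hHm, hHc⟩ := mem_filter.mp hH
    obtain ⟨hHm', hHc'⟩ := mem_filter.mp hH'
    rw [Finset.disjoint_left]
    intro x hx hx'
    obtain ⟨hxS, hxH⟩ := Finset.mem_sdiff.mp hx
    obtain ⟨_, hxH'⟩ := Finset.mem_sdiff.mp hx'
    refine hne (eq_of_common_pts hgen hHm hHm' ?_)
    have h1 := Finset.card_inter_add_card_union (pts S H) (pts S H')
    have h2 : (pts S H ∪ pts S H').card ≤ d + 2 := by
      have hsub : pts S H ∪ pts S H' ⊆ S.erase x := by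
        intro y hy
        refine Finset.mem_erase.mpr ⟨?_, ?_⟩
        · rintro rfl
          rcases Finset.mem_union.mp hy with h | h
          · exact hxH h
          · exact hxH' h
        · rcases Finset.mem_union.mp hy with h | h <;> exact pts_subset h
      calc (pts S H ∪ pts S H').card ≤ (S.erase x).card := card_le_card hsub
        _ = d + 2 := by rw [Finset.card_erase_of_mem hxS, hS]; omega
    omega
  have hcard : (F.biUnion (fun H => S \ pts S H)).card = 2 * F.card := by
    rw [Finset.card_biUnion hdisj]
    rw [Finset.sum_const_nat (m := 2) fun H hH => ?_]
    · ring
    · obtain ⟨hHm, hHc⟩ := mem_filter.mp hH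
      rw [Finset.card_sdiff_of_subset pts_subset, hS, hHc]
      omega
  have hsub : F.biUnion (fun H => S \ pts S H) ⊆ S :=
    Finset.biUnion_subset.mpr fun H _ => Finset.sdiff_subset
  calc 2 * F.card = _ := hcard.symm
    _ ≤ S.card := card_le_card hsub
    _ = d + 3 := hS

omit hS hgen in
lemma choose_two_mul_two : (d+2).choose 2 * 2 = (d+2) * (d+1) := by
  rw [Nat.choose_two_right]
  have h : d + 2 - 1 = d + 1 := by omega
  rw [h, Nat.div_mul_cancel]
  have : Even ((d+1) * (d+2)) := Nat.even_mul_succ_self (d+1)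
  rcases this with ⟨m, hm⟩
  refine ⟨m, ?_⟩
  rw [Nat.mul_comm (d+2) (d+1), hm]
  omega

lemma lower_bound (hspan : spanF S = (⊤ : Submodule ℝ (Fin (d+1) → ℝ))) (heven : Even d) :
    (d+2).choose 3 ≤ ordinaryCount d S := by
  obtain ⟨kk, hk⟩ := heven
  set t0 := ((Hset d S).filter (fun H => (pts S H).card = d)).card with ht0
  set t1 := ((Hset d S).filter (fun H => (pts S H).card = d+1)).card with ht1
  set t2 := ((Hset d S).filter (fun H => (pts S H).card = d+2)).card with ht2
  have hid : t0 + (d+1) * t1 + (d+2).choose 2 * t2 = (d+3).choose 3 :=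
    tau_identity hS hgen hspan
  have hpascal : (d+3).choose 3 = (d+2).choose 2 + (d+2).choose 3 :=
    Nat.choose_succ_succ (d+2) 2
  have hoc : ordinaryCount d S = t0 := ordinaryCount_eq hgen
  have ht2le : t2 ≤ 1 := tau2_le_one hS hgen
  have h2t1 : 2 * t1 ≤ d + 3 := two_tau1 hS hgen
  rw [hoc]
  rcases Nat.eq_zero_or_pos t2 with h2 | h2
  · -- t2 = 0 : need (d+1) * t1 ≤ (d+2).choose 2
    rw [h2, Nat.mul_zero, Nat.add_zero] at hid
    have ht1le : t1 ≤ kk + 1 := by omega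
    have hmul : (d+1) * t1 ≤ (d+1) * (kk+1) := Nat.mul_le_mul_left _ ht1le
    have hC : (d+1) * (kk+1) = (d+2).choose 2 := by
      have h2' : ((d+1) * (kk+1)) * 2 = (d+2).choose 2 * 2 := by
        rw [choose_two_mul_two]
        subst hk
        ring
      exact Nat.eq_of_mul_eq_mul_right (by norm_num) h2'
    omega
  · -- t2 = 1, so t1 = 0
    have ht2e : t2 = 1 := by omega
    have ht1z : t1 = 0 := by
      have hne : ((Hset d S).filter (fun H => (pts S H).card = d+2)).Nonempty :=
        Finset.card_pos.mp h2
      rw [ht1, no_mix hS hgen hne, Finset.card_empty]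
    rw [ht2e, Nat.mul_one, ht1z, Nat.mul_zero, Nat.add_zero] at hid
    omega

end counting

section construction

variable (d : ℕ)

/-- the Vandermonde curve points in `ℝ^d` -/
noncomputable def cvec (j : Fin (d+2)) : Fin d → ℝ := fun i => ((j : ℕ) : ℝ) ^ (i : ℕ)

/-- base vectors: curve points embedded in the hyperplane `x_last = 0` of `ℝ^{d+1}` -/
noncomputable def bvec (j : Fin (d+2)) : Fin (d+1) → ℝ := Fin.snoc (cvec d j) 0

/-- apex vector -/
noncomputable def avec : Fin (d+1) → ℝ := Pi.single (Fin.last d) 1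

/-- extension by a zero last coordinate, as a linear map -/
noncomputable def Lsnoc : (Fin d → ℝ) →ₗ[ℝ] (Fin (d+1) → ℝ) where
  toFun x := Fin.snoc x 0
  map_add' x y := by
    funext i
    refine Fin.lastCases ?_ (fun j => ?_) i <;> simp
  map_smul' c x := by
    funext i
    refine Fin.lastCases ?_ (fun j => ?_) i <;> simp

lemma Lsnoc_ker : LinearMap.ker (Lsnoc d) = ⊥ := by
  rw [LinearMap.ker_eq_bot]
  intro x y h
  funext i
  have := congrFun h i.castSucc
  simpa [Lsnoc] using this

/-- the hyperplane `x_last = 0` -/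
noncomputable def H0 : Submodule ℝ (Fin (d+1) → ℝ) :=
  LinearMap.ker (LinearMap.proj (R := ℝ) (φ := fun _ : Fin (d+1) => ℝ) (Fin.last d))

lemma finrank_H0 : finrank ℝ (H0 d) = d := by
  have hsurj : Function.Surjective
      (LinearMap.proj (R := ℝ) (φ := fun _ : Fin (d+1) => ℝ) (Fin.last d)) :=
    fun x => ⟨Pi.single (Fin.last d) x, by simp⟩
  have h := LinearMap.finrank_range_add_finrank_ker
    (LinearMap.proj (R := ℝ) (φ := fun _ : Fin (d+1) => ℝ) (Fin.last d))
  rw [LinearMap.range_eq_top.mpr hsurj, Module.finrank_fin_fun, finrank_top, finrank_self] at h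
  unfold H0
  omega

lemma bvec_mem_H0 (j : Fin (d+2)) : bvec d j ∈ H0 d := by
  simp [H0, bvec, LinearMap.mem_ker, Fin.snoc_last]

lemma avec_not_mem_H0 : avec d ∉ H0 d := by
  simp [H0, avec, LinearMap.mem_ker]

lemma avec_ne_zero : avec d ≠ 0 := by
  intro h
  have := congrFun h (Fin.last d)
  simp [avec] at this

variable {d} (hd : 2 ≤ d)

include hd

lemma bvec_ne_zero (j : Fin (d+2)) : bvec d j ≠ 0 := by
  intro h
  have h0 : (0 : ℕ) < d := by omega
  have hc := congrFun h (Fin.castSucc ⟨0, h0⟩)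
  rw [show bvec d j (Fin.castSucc ⟨0, h0⟩) = cvec d j ⟨0, h0⟩ from Fin.snoc_castSucc _ _ _] at hc
  simp [cvec] at hc

omit hd

lemma cvec_indep {T : Finset (Fin (d+2))} (hT : T.card = d) :
    LinearIndependent ℝ (fun i : Fin d => cvec d (T.orderIsoOfFin hT i)) := by
  set v : Fin d → ℝ := fun i => (((T.orderIsoOfFin hT i : Fin (d+2)) : ℕ) : ℝ) with hv
  have hvinj : Function.Injective v := by
    intro i i' h
    have h1 : ((T.orderIsoOfFin hT i : Fin (d+2)) : ℕ)
        = ((T.orderIsoOfFin hT i' : Fin (d+2)) : ℕ) := Nat.cast_injective h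
    have h2 : (T.orderIsoOfFin hT i : Fin (d+2)) = (T.orderIsoOfFin hT i' : Fin (d+2)) :=
      Fin.val_injective h1
    exact (T.orderIsoOfFin hT).injective (Subtype.coe_injective h2)
  have heq : (fun i : Fin d => cvec d (T.orderIsoOfFin hT i))
      = fun i => Matrix.vandermonde v i := rfl
  rw [heq]
  exact Matrix.linearIndependent_rows_iff_isUnit.mpr
    ((Matrix.isUnit_iff_isUnit_det _).mpr (isUnit_iff_ne_zero.mpr
      (Matrix.det_vandermonde_ne_zero_iff.mpr hvinj)))

lemma bvec_indep {T : Finset (Fin (d+2))} (hT : T.card = d) :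
    LinearIndependent ℝ (fun i : Fin d => bvec d (T.orderIsoOfFin hT i)) := by
  have h := (cvec_indep hT).map' (Lsnoc d) (Lsnoc_ker d)
  exact h

lemma bvec_indep_le {T : Finset (Fin (d+2))} {k : ℕ} (hTk : T.card = k) (hk : k ≤ d) :
    LinearIndependent ℝ (fun i : Fin k => bvec d (T.orderIsoOfFin hTk i)) := by
  obtain ⟨T', hTT', -, hT'c⟩ := Finset.exists_subsuperset_card_eq (T.subset_univ)
    (by omega : T.card ≤ d) (by simp : d ≤ (Finset.univ : Finset (Fin (d+2))).card)
  set g : Fin k → Fin d := fun i =>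
    (T'.orderIsoOfFin hT'c).symm ⟨(T.orderIsoOfFin hTk i : Fin (d+2)),
      hTT' (T.orderIsoOfFin hTk i).2⟩ with hg
  have hginj : Function.Injective g := by
    intro i i' h
    have h1 := congrArg (T'.orderIsoOfFin hT'c) h
    rw [OrderIso.apply_symm_apply, OrderIso.apply_symm_apply] at h1
    have h2 : ((T.orderIsoOfFin hTk) i : Fin (d+2)) = ((T.orderIsoOfFin hTk) i' : Fin (d+2)) := by
      have h3 := Subtype.ext_iff.mp h1
      simpa using h3
    exact (T.orderIsoOfFin hTk).injective (Subtype.coe_injective h2)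
  have h := (bvec_indep hT'c).comp g hginj
  have heq : ((fun i : Fin d => bvec d (T'.orderIsoOfFin hT'c i)) ∘ g)
      = fun i : Fin k => bvec d (T.orderIsoOfFin hTk i) := by
    funext i
    simp only [Function.comp_apply, hg, OrderIso.apply_symm_apply]
  rw [heq] at h
  exact h

lemma range_bvec_orderIso {T : Finset (Fin (d+2))} {k : ℕ} (hTk : T.card = k) :
    Set.range (fun i : Fin k => bvec d (T.orderIsoOfFin hTk i)) = bvec d '' ↑T := by
  ext x
  simp only [Set.mem_range, Set.mem_image, Finset.mem_coe]
  constructor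
  · rintro ⟨i, rfl⟩
    exact ⟨_, (T.orderIsoOfFin hTk i).2, rfl⟩
  · rintro ⟨j, hj, rfl⟩
    exact ⟨(T.orderIsoOfFin hTk).symm ⟨j, hj⟩, by rw [OrderIso.apply_symm_apply]⟩

lemma finrank_span_bvec {T : Finset (Fin (d+2))} {k : ℕ} (hTk : T.card = k) (hk : k ≤ d) :
    finrank ℝ (Submodule.span ℝ (bvec d '' ↑T)) = k := by
  rw [← range_bvec_orderIso hTk, finrank_span_eq_card (bvec_indep_le hTk hk)]
  simp

lemma span_bvec_le_H0 (T : Finset (Fin (d+2))) : Submodule.span ℝ (bvec d '' ↑T) ≤ H0 d :=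
  Submodule.span_le.mpr (by rintro x ⟨j, _, rfl⟩; exact bvec_mem_H0 d j)

lemma span_bvec_eq_H0 {T : Finset (Fin (d+2))} (hT : T.card = d) :
    Submodule.span ℝ (bvec d '' ↑T) = H0 d :=
  Submodule.eq_of_le_of_finrank_le (span_bvec_le_H0 T)
    (by rw [finrank_H0, finrank_span_bvec hT le_rfl])

lemma finrank_sup_avec {W : Submodule ℝ (Fin (d+1) → ℝ)} (hW : W ≤ H0 d) :
    finrank ℝ ↥(Submodule.span ℝ {avec d} ⊔ W) = finrank ℝ W + 1 := by
  have hdisj : Submodule.span ℝ {avec d} ⊓ W = ⊥ := by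
    have h : Disjoint W (Submodule.span ℝ {avec d}) :=
      Submodule.disjoint_span_singleton.mpr (fun h => absurd (hW h) (avec_not_mem_H0 d))
    rw [inf_comm]
    exact disjoint_iff.mp h
  have h := Submodule.finrank_sup_add_finrank_inf_eq (Submodule.span ℝ {avec d}) W
  rw [hdisj, finrank_bot, finrank_span_singleton (avec_ne_zero d)] at h
  omega

variable (hd : 2 ≤ d)

noncomputable def Ppt (j : Fin (d+2)) : Projectivization ℝ (Fin (d+1) → ℝ) :=
  Projectivization.mk ℝ (bvec d j) (bvec_ne_zero hd j)

noncomputable def Apt (d : ℕ) : Projectivization ℝ (Fin (d+1) → ℝ) :=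
  Projectivization.mk ℝ (avec d) (avec_ne_zero d)

lemma Ppt_submodule (j : Fin (d+2)) : (Ppt hd j).submodule = Submodule.span ℝ {bvec d j} :=
  Projectivization.submodule_mk _ _

lemma Apt_submodule : (Apt d).submodule = Submodule.span ℝ {avec d} :=
  Projectivization.submodule_mk _ _

lemma Ppt_inj : Function.Injective (Ppt hd) := by
  intro j j' h
  rw [Ppt, Ppt, Projectivization.mk_eq_mk_iff] at h
  obtain ⟨u, hu⟩ := h
  have h0lt : (0:ℕ) < d := by omega
  have h1lt : (1:ℕ) < d := by omega
  have hbc : ∀ (jj : Fin (d+2)) (i : Fin d), bvec d jj i.castSucc = cvec d jj i :=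
    fun jj i => Fin.snoc_castSucc _ _ _
  have h0 : (u : ℝ) * cvec d j' ⟨0, h0lt⟩ = cvec d j ⟨0, h0lt⟩ := by
    have h := congrFun hu (Fin.castSucc ⟨0, h0lt⟩)
    rw [Pi.smul_apply, hbc, hbc, Units.smul_def] at h
    exact h
  have h1 : (u : ℝ) * cvec d j' ⟨1, h1lt⟩ = cvec d j ⟨1, h1lt⟩ := by
    have h := congrFun hu (Fin.castSucc ⟨1, h1lt⟩)
    rw [Pi.smul_apply, hbc, hbc, Units.smul_def] at h
    exact h
  simp only [cvec, pow_zero, mul_one] at h0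
  simp only [cvec, pow_one] at h1
  rw [h0, one_mul] at h1
  exact (Fin.val_injective (Nat.cast_injective h1)).symm

lemma Apt_ne_Ppt (j : Fin (d+2)) : Apt d ≠ Ppt hd j := by
  intro h
  rw [Ppt] at h
  unfold Apt at h
  rw [Projectivization.mk_eq_mk_iff] at h
  obtain ⟨u, hu⟩ := h
  have hlast := congrFun hu (Fin.last d)
  rw [Pi.smul_apply, show bvec d j (Fin.last d) = 0 from Fin.snoc_last _ _, smul_zero] at hlast
  simp [avec] at hlast

noncomputable def Scon : Finset (Projectivization ℝ (Fin (d+1) → ℝ)) :=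
  insert (Apt d) (Finset.univ.image (Ppt hd))

lemma Apt_not_mem_image : Apt d ∉ Finset.univ.image (Ppt hd) := by
  rw [Finset.mem_image]
  rintro ⟨j, -, hj⟩
  exact Apt_ne_Ppt hd j hj.symm

lemma Scon_card : (Scon hd).card = d + 3 := by
  rw [Scon, Finset.card_insert_of_notMem (Apt_not_mem_image hd),
    Finset.card_image_of_injective _ (Ppt_inj hd), Finset.card_univ, Fintype.card_fin]

lemma spanF_image (T : Finset (Fin (d+2))) :
    spanF (T.image (Ppt hd)) = Submodule.span ℝ (bvec d '' ↑T) := by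
  apply le_antisymm
  · rw [spanF_le_iff]
    intro p hp
    obtain ⟨j, hj, rfl⟩ := Finset.mem_image.mp hp
    rw [Ppt_submodule, Submodule.span_singleton_le_iff_mem]
    exact Submodule.subset_span ⟨j, hj, rfl⟩
  · rw [Submodule.span_le]
    rintro x ⟨j, hj, rfl⟩
    have h1 : bvec d j ∈ (Ppt hd j).submodule := by
      rw [Ppt_submodule]
      exact Submodule.mem_span_singleton_self _
    have h2 : (Ppt hd j).submodule ≤ spanF (T.image (Ppt hd)) :=
      le_iSup₂_of_le (Ppt hd j) (Finset.mem_image_of_mem _ hj) le_rfl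
    exact h2 h1

lemma spanF_insert (p : Projectivization ℝ (Fin (d+1) → ℝ))
    (X : Finset (Projectivization ℝ (Fin (d+1) → ℝ))) :
    spanF (insert p X) = p.submodule ⊔ spanF X := by
  apply le_antisymm
  · rw [spanF_le_iff]
    intro q hq
    rcases Finset.mem_insert.mp hq with rfl | hq
    · exact le_sup_left
    · exact le_trans (le_iSup₂_of_le q hq le_rfl) le_sup_right
  · refine sup_le ?_ ?_
    · exact le_iSup₂_of_le p (Finset.mem_insert_self _ _) le_rfl
    · exact spanF_mono (Finset.subset_insert _ _)

lemma subset_image_decomp {X : Finset (Projectivization ℝ (Fin (d+1) → ℝ))}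
    (hX : X ⊆ Finset.univ.image (Ppt hd)) :
    ∃ T : Finset (Fin (d+2)), T.image (Ppt hd) = X ∧ T.card = X.card := by
  obtain ⟨T, -, hT⟩ := Finset.subset_image_iff.mp hX
  exact ⟨T, hT, by rw [← hT, Finset.card_image_of_injective _ (Ppt_inj hd)]⟩

lemma erase_Apt_subset {X : Finset (Projectivization ℝ (Fin (d+1) → ℝ))}
    (hX : X ⊆ Scon hd) : X.erase (Apt d) ⊆ Finset.univ.image (Ppt hd) := by
  intro p hp
  obtain ⟨hpne, hpX⟩ := Finset.mem_erase.mp hp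
  rcases Finset.mem_insert.mp (hX hpX) with rfl | h
  · exact absurd rfl hpne
  · exact h

lemma hgen_con : ∀ T ⊆ Scon hd, T.card = d → finrank ℝ (spanF T) = d := by
  intro T hTS hTc
  by_cases hA : Apt d ∈ T
  · obtain ⟨T₀, hT₀, hT₀c⟩ := subset_image_decomp hd (erase_Apt_subset hd hTS)
    have hT₀card : T₀.card = d - 1 := by
      rw [hT₀c, Finset.card_erase_of_mem hA, hTc]
    have hTeq : T = insert (Apt d) (T₀.image (Ppt hd)) := by
      rw [hT₀]
      exact (Finset.insert_erase hA).symm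
    rw [hTeq, spanF_insert, Apt_submodule, spanF_image hd,
      finrank_sup_avec (span_bvec_le_H0 T₀), finrank_span_bvec hT₀card (by omega)]
    omega
  · have hsub : T ⊆ Finset.univ.image (Ppt hd) := by
      intro p hp
      rcases Finset.mem_insert.mp (hTS hp) with rfl | h
      · exact absurd hp hA
      · exact h
    obtain ⟨T₀, hT₀, hT₀c⟩ := subset_image_decomp hd hsub
    rw [← hT₀, spanF_image hd, finrank_span_bvec (by rw [hT₀c, hTc] : T₀.card = d) le_rfl]

lemma hspan_con : spanF (Scon hd) = (⊤ : Submodule ℝ (Fin (d+1) → ℝ)) := by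
  rw [Scon, spanF_insert, Apt_submodule, spanF_image hd]
  obtain ⟨T, -, hTc⟩ := Finset.exists_subset_card_eq
    (show d ≤ (Finset.univ : Finset (Fin (d+2))).card by simp)
  have h1 : Submodule.span ℝ (bvec d '' ↑(Finset.univ : Finset (Fin (d+2)))) = H0 d := by
    refine le_antisymm (span_bvec_le_H0 _) ?_
    rw [← span_bvec_eq_H0 hTc]
    exact Submodule.span_mono (Set.image_mono (by intro x _; simp))
  rw [h1]
  apply Submodule.eq_top_of_finrank_eq
  rw [finrank_sup_avec le_rfl, finrank_H0, Module.finrank_fin_fun]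

lemma pts_H0 : pts (Scon hd) (H0 d) = Finset.univ.image (Ppt hd) := by
  ext p
  simp only [pts, Scon, Finset.mem_filter, Finset.mem_insert]
  constructor
  · rintro ⟨rfl | h, hple⟩
    · exfalso
      rw [Apt_submodule, Submodule.span_singleton_le_iff_mem] at hple
      exact avec_not_mem_H0 d hple
    · exact h
  · intro hp
    refine ⟨Or.inr hp, ?_⟩
    obtain ⟨j, -, rfl⟩ := Finset.mem_image.mp hp
    rw [Ppt_submodule, Submodule.span_singleton_le_iff_mem]
    exact bvec_mem_H0 d j

lemma card_image_Ppt : (Finset.univ.image (Ppt hd)).card = d + 2 := by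
  rw [Finset.card_image_of_injective _ (Ppt_inj hd), Finset.card_univ, Fintype.card_fin]

lemma H0_mem_Hset : H0 d ∈ Hset d (Scon hd) := by
  obtain ⟨T, -, hTc⟩ := Finset.exists_subset_card_eq
    (show d ≤ (Finset.univ : Finset (Fin (d+2))).card by simp)
  have hmem : T.image (Ppt hd) ∈ (Scon hd).powersetCard d := by
    refine Finset.mem_powersetCard.mpr ⟨?_, ?_⟩
    · exact (Finset.image_subset_image (T.subset_univ)).trans (Finset.subset_insert _ _)
    · rw [Finset.card_image_of_injective _ (Ppt_inj hd), hTc]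
  have heq : spanF (T.image (Ppt hd)) = H0 d := by
    rw [spanF_image hd, span_bvec_eq_H0 hTc]
  exact heq ▸ spanF_mem_Hset hmem

lemma classification : ∀ H ∈ Hset d (Scon hd), d + 1 ≤ (pts (Scon hd) H).card → H = H0 d := by
  intro H hH hcard
  have hrank : finrank ℝ H = d := finrank_of_mem_Hset (hgen_con hd) hH
  by_cases hA : Apt d ∈ pts (Scon hd) H
  · exfalso
    obtain ⟨T₀, hT₀, hT₀c⟩ := subset_image_decomp hd (erase_Apt_subset hd (pts_subset (H := H)))
    have hdle : d ≤ T₀.card := by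
      rw [hT₀c, Finset.card_erase_of_mem hA]
      omega
    obtain ⟨T₁, hT₁sub, hT₁c⟩ := Finset.exists_subset_card_eq hdle
    have hH0le : H0 d ≤ H := by
      rw [← span_bvec_eq_H0 hT₁c, ← spanF_image hd]
      refine le_trans (spanF_mono (Finset.image_subset_image hT₁sub)) ?_
      have hsub : T₀.image (Ppt hd) ⊆ pts (Scon hd) H := by
        rw [hT₀]
        exact Finset.erase_subset _ _
      exact le_trans (spanF_mono hsub) spanF_pts_le
    have havec : avec d ∈ H := by
      have h := (Finset.mem_filter.mp hA).2
      rw [Apt_submodule, Submodule.span_singleton_le_iff_mem] at h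
      exact h
    have hle : Submodule.span ℝ {avec d} ⊔ H0 d ≤ H :=
      sup_le ((Submodule.span_singleton_le_iff_mem _ _).mpr havec) hH0le
    have hmono := Submodule.finrank_mono hle
    rw [hrank, finrank_sup_avec le_rfl, finrank_H0] at hmono
    omega
  · have hsub : pts (Scon hd) H ⊆ Finset.univ.image (Ppt hd) := by
      intro p hp
      rcases Finset.mem_insert.mp (pts_subset hp) with rfl | h
      · exact absurd hp hA
      · exact h
    obtain ⟨T₀, hT₀, hT₀c⟩ := subset_image_decomp hd hsub
    have hdle : d ≤ T₀.card := by omega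
    obtain ⟨T₁, hT₁sub, hT₁c⟩ := Finset.exists_subset_card_eq hdle
    have hH0le : H0 d ≤ H := by
      rw [← span_bvec_eq_H0 hT₁c, ← spanF_image hd]
      refine le_trans (spanF_mono (Finset.image_subset_image hT₁sub)) ?_
      have hsub2 : T₀.image (Ppt hd) ⊆ pts (Scon hd) H := by rw [hT₀]
      exact le_trans (spanF_mono hsub2) spanF_pts_le
    exact (Submodule.eq_of_le_of_finrank_le hH0le (by rw [hrank, finrank_H0])).symm

lemma count_con : ordinaryCount d (Scon hd) = (d+2).choose 3 := by
  have hcardH0 : (pts (Scon hd) (H0 d)).card = d + 2 := by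
    rw [pts_H0 hd, card_image_Ppt hd]
  have htau1 : (Hset d (Scon hd)).filter (fun H => (pts (Scon hd) H).card = d+1) = ∅ := by
    rw [Finset.eq_empty_iff_forall_notMem]
    intro H hH
    obtain ⟨hHm, hHc⟩ := Finset.mem_filter.mp hH
    have := classification hd H hHm (by omega)
    rw [this, hcardH0] at hHc
    omega
  have htau2 : (Hset d (Scon hd)).filter (fun H => (pts (Scon hd) H).card = d+2) = {H0 d} := by
    ext H
    simp only [Finset.mem_filter, Finset.mem_singleton]
    constructor
    · rintro ⟨hHm, hHc⟩
      exact classification hd H hHm (by omega)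
    · rintro rfl
      exact ⟨H0_mem_Hset hd, hcardH0⟩
  have hid := tau_identity (Scon_card hd) (hgen_con hd) (hspan_con hd)
  rw [htau1, htau2, Finset.card_empty, Finset.card_singleton] at hid
  have hpascal : (d+3).choose 3 = (d+2).choose 2 + (d+2).choose 3 :=
    Nat.choose_succ_succ (d+2) 2
  rw [ordinaryCount_eq (hgen_con hd)]
  omega

end construction

end Stmt7

theorem stmt7 (d : ℕ) (heven : Even d) (hd : 2 ≤ d) :
    e d (d + 3) = (d + 2).choose 3 := by
  rw [e]
  have hmem : (d+2).choose 3 ∈ { N | ∃ S : Finset (Projectivization ℝ (Fin (d+1) → ℝ)),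
      S.card = d + 3 ∧
      (∀ T ⊆ S, T.card = d →
        finrank ℝ ↥(⨆ p ∈ T, Projectivization.submodule p) = d) ∧
      (⨆ p ∈ S, Projectivization.submodule p) = ⊤ ∧ N = ordinaryCount d S } := by
    refine ⟨Stmt7.Scon hd, Stmt7.Scon_card hd, ?_, ?_, (Stmt7.count_con hd).symm⟩
    · exact Stmt7.hgen_con hd
    · exact Stmt7.hspan_con hd
  refine le_antisymm (Nat.sInf_le hmem) (le_csInf ⟨_, hmem⟩ ?_)
  rintro N ⟨S, hc, hg, hsp, rfl⟩
  exact Stmt7.lower_bound hc hg hsp heven
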